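/- Let G be a connected graph with n vertices and m edges whose minimum arrangement cost is at most m + k. Then either G has a k-separating bridge, or n ≤ 4k + 1. -/

import Mathlib

/-- position of the lower endpoint of an edge -/
def eLo {V : Type*} (pos : V → ℕ) : Sym2 V → ℕ :=
  Sym2.lift ⟨fun u v => min (pos u) (pos v), fun u v => min_comm _ _⟩

/-- position of the upper endpoint of an edge -/
def eHi {V : Type*} (pos : V → ℕ) : Sym2 V → ℕ :=
  Sym2.lift ⟨fun u v => max (pos u) (pos v), fun u v => max_comm _ _⟩

@[simp] lemma eLo_mk {V : Type*} (pos : V → ℕ) (u v : V) :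
    eLo pos s(u, v) = min (pos u) (pos v) := rfl

@[simp] lemma eHi_mk {V : Type*} (pos : V → ℕ) (u v : V) :
    eHi pos s(u, v) = max (pos u) (pos v) := rfl

lemma aux_walk_cross {V : Type*} {G : SimpleGraph V} (pos : V → ℕ) (i : ℕ) :
    ∀ {u w : V}, G.Walk u w → pos u ≤ i → i < pos w →
      ∃ a b, G.Adj a b ∧ pos a ≤ i ∧ i < pos b := by
  intro u w p
  induction p with
  | nil => intro h1 h2; omega
  | @cons x y z h q ih =>
    intro h1 h2
    by_cases hy : pos y ≤ i
    · exact ih hy h2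
    · exact ⟨x, y, h, h1, by omega⟩

lemma aux_side_reach {V : Type*} {G : SimpleGraph V} {E : Sym2 V} {a₀ : V} (S : V → Prop)
    (h1 : ∀ x z, G.Adj x z → S x → S z → s(x, z) ≠ E)
    (h2 : ∀ x z, G.Adj x z → S x → ¬ S z → x = a₀) :
    ∀ {x y : V}, (p : G.Walk x y) → S x →
      (G.deleteEdges {E}).Reachable x a₀ ∨
        (S y ∧ (G.deleteEdges {E}).Reachable x y) := by
  intro x y p
  induction p with
  | nil => intro hx; exact Or.inr ⟨hx, SimpleGraph.Reachable.refl _⟩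
  | @cons u v w h q ih =>
    intro hx
    by_cases hv : S v
    · have hadj : (G.deleteEdges {E}).Adj u v := by
        rw [SimpleGraph.deleteEdges_adj]
        exact ⟨h, by simpa using h1 u v h hx hv⟩
      rcases ih hv with h' | ⟨hw, h'⟩
      · exact Or.inl ((hadj.reachable).trans h')
      · exact Or.inr ⟨hw, (hadj.reachable).trans h'⟩
    · have := h2 u v h hx hv
      subst this
      exact Or.inl (SimpleGraph.Reachable.refl _)


open Classical in
/-- The cost of an ordering `α` of the vertices of `G`: the sum over all edges `{u,v}` of
the length `|α(u) − α(v)|`. -/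
noncomputable def arrangementCost {V : Type*} [Fintype V] (G : SimpleGraph V)
    (α : V ≃ Fin (Fintype.card V)) : ℕ :=
  ∑ e ∈ G.edgeFinset,
    Sym2.lift ⟨fun u v => ((α u : ℤ) - (α v : ℤ)).natAbs,
      fun u v => by simp only []; omega⟩ e

open Classical in
lemma cost_eq {V : Type*} [Fintype V] (G : SimpleGraph V) (α : V ≃ Fin (Fintype.card V)) :
    arrangementCost G α
      = ∑ e ∈ G.edgeFinset, (eHi (fun v => (α v : ℕ)) e - eLo (fun v => (α v : ℕ)) e) := by
  unfold arrangementCost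
  apply Finset.sum_congr rfl
  intro e _
  induction e using Sym2.ind with
  | _ u v => simp only [Sym2.lift_mk, eLo_mk, eHi_mk]; omega

open Classical in
lemma card_side_le {V : Type*} [Fintype V] (α : V ≃ Fin (Fintype.card V)) (i : ℕ)
    (h : i < Fintype.card V) : ({x : V | (α x : ℕ) ≤ i}).ncard = i + 1 := by
  rw [Set.ncard_eq_toFinset_card', Set.toFinset_setOf, ← Fintype.card_subtype]
  have e1 : {x : V // (α x : ℕ) ≤ i} ≃ {j : Fin (Fintype.card V) // (j : ℕ) ≤ i} :=
    α.subtypeEquiv (fun v => Iff.rfl)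
  rw [Fintype.card_congr e1]
  rw [Fintype.card_subtype]
  have : (Finset.univ.filter (fun j : Fin (Fintype.card V) => (j : ℕ) ≤ i))
      = Finset.Iic (⟨i, h⟩ : Fin (Fintype.card V)) := by
    ext j
    simp [Fin.le_def]
  rw [this, Fin.card_Iic]

open Classical in
lemma card_side_gt {V : Type*} [Fintype V] (α : V ≃ Fin (Fintype.card V)) (i : ℕ)
    (h : i < Fintype.card V) :
    ({x : V | i < (α x : ℕ)}).ncard = Fintype.card V - (i + 1) := by
  have h2 : ({x : V | (α x : ℕ) ≤ i}).ncard = i + 1 := card_side_le α i h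
  have hu : ({x : V | (α x : ℕ) ≤ i}) ∪ ({x : V | i < (α x : ℕ)}) = Set.univ := by
    ext x; simp only [Set.mem_union, Set.mem_setOf_eq, Set.mem_univ, iff_true]; omega
  have hd : Disjoint ({x : V | (α x : ℕ) ≤ i}) ({x : V | i < (α x : ℕ)}) := by
    rw [Set.disjoint_left]; intro x hx hx2; simp at hx hx2; omega
  have := Set.ncard_union_eq hd (Set.toFinite _) (Set.toFinite _)
  rw [hu] at this
  rw [Set.ncard_univ, Nat.card_eq_fintype_card] at this
  omega

/-- A bridge `e = {u,v}` of `G` is `k`-separating if each of the two connected components of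
`G − e` (the one of `u` and the one of `v`) has more than `k` vertices. -/
def HasKSeparatingBridge {V : Type*} (G : SimpleGraph V) (k : ℕ) : Prop :=
  ∃ u v, G.Adj u v ∧ G.IsBridge s(u, v) ∧
    k < Nat.card {w | (G.deleteEdges {s(u, v)}).Reachable u w} ∧
    k < Nat.card {w | (G.deleteEdges {s(u, v)}).Reachable v w}

open Classical in
/-- If `G` is a connected graph with `n` vertices and `m` edges whose minimum arrangement
cost is at most `m + k`, then either `G` has a `k`-separating bridge, or `n ≤ 4k + 1`. -/
theorem kSeparatingBridge_or_small {V : Type*} [Fintype V] (G : SimpleGraph V)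
    (hconn : G.Connected) (k : ℕ)
    (hcost : ∃ α : V ≃ Fin (Fintype.card V), arrangementCost G α ≤ G.edgeFinset.card + k) :
    HasKSeparatingBridge G k ∨ Fintype.card V ≤ 4 * k + 1 := by
  classical
  by_cases hb : HasKSeparatingBridge G k
  · exact Or.inl hb
  right
  obtain ⟨α, hα⟩ := hcost
  set pos : V → ℕ := fun v => (α v : ℕ) with hpos
  have posinj : Function.Injective pos := by
    intro a b h
    exact α.injective (Fin.val_injective h)
  have poslt : ∀ v, pos v < (Fintype.card V) := fun v => (α v).isLt
  have hlt : ∀ e ∈ G.edgeFinset, eLo pos e < eHi pos e := by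
    intro e he
    induction e using Sym2.ind with
    | _ u v =>
      rw [SimpleGraph.mem_edgeFinset, SimpleGraph.mem_edgeSet] at he
      have hne : pos u ≠ pos v := fun h => he.ne (posinj h)
      simp only [eLo_mk, eHi_mk]
      omega
  have hlen : ∑ e ∈ G.edgeFinset, (eHi pos e - eLo pos e) ≤ G.edgeFinset.card + k := by
    rw [cost_eq G α] at hα
    exact hα
  set F : ℕ → Finset (Sym2 V) :=
    fun i => G.edgeFinset.filter (fun e => eLo pos e ≤ i ∧ i < eHi pos e) with hF
  have hFmem : ∀ i (e : Sym2 V), e ∈ F i ↔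
      e ∈ G.edgeFinset ∧ eLo pos e ≤ i ∧ i < eHi pos e := by
    intro i e; rw [hF]; simp [Finset.mem_filter]
  -- every cut is crossed
  have hone : ∀ i, i < (Fintype.card V) - 1 → 1 ≤ (F i).card := by
    intro i hi
    have hi1 : i < (Fintype.card V) := by omega
    have hi2 : i + 1 < (Fintype.card V) := by omega
    obtain ⟨p⟩ := hconn (α.symm ⟨i, hi1⟩) (α.symm ⟨i + 1, hi2⟩)
    have h1 : pos (α.symm ⟨i, hi1⟩) = i := by simp [hpos]
    have h2 : pos (α.symm ⟨i + 1, hi2⟩) = i + 1 := by simp [hpos]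
    obtain ⟨a, b, hab, ha, hb2⟩ := aux_walk_cross pos i p (by omega) (by omega)
    refine Finset.card_pos.mpr ⟨s(a, b), ?_⟩
    rw [hFmem]
    rw [SimpleGraph.mem_edgeFinset, SimpleGraph.mem_edgeSet]
    refine ⟨hab, ?_, ?_⟩ <;> simp only [eLo_mk, eHi_mk] <;> omega
  -- only one unit-length edge can cross a given cut
  have hshort : ∀ i, ∀ e₁ ∈ F i, ∀ e₂ ∈ F i,
      eHi pos e₁ - eLo pos e₁ = 1 → eHi pos e₂ - eLo pos e₂ = 1 → e₁ = e₂ := by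
    intro i e₁ he₁ e₂ he₂
    rw [hFmem] at he₁ he₂
    induction e₁ using Sym2.ind with
    | _ u v =>
      induction e₂ using Sym2.ind with
      | _ x y =>
        simp only [eLo_mk, eHi_mk] at he₁ he₂ ⊢
        intro l1 l2
        have c1 : (pos u = i ∧ pos v = i + 1) ∨ (pos v = i ∧ pos u = i + 1) := by omega
        have c2 : (pos x = i ∧ pos y = i + 1) ∨ (pos y = i ∧ pos x = i + 1) := by omega
        rcases c1 with ⟨pu, pv⟩ | ⟨pv, pu⟩ <;> rcases c2 with ⟨px, py⟩ | ⟨py, px⟩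
        · rw [posinj (pu.trans px.symm), posinj (pv.trans py.symm)]
        · rw [posinj (pu.trans py.symm), posinj (pv.trans px.symm)]
          exact Sym2.eq_swap
        · rw [posinj (pu.trans py.symm), posinj (pv.trans px.symm)]
          exact Sym2.eq_swap
        · rw [posinj (pu.trans px.symm), posinj (pv.trans py.symm)]
  -- middle cuts are crossed at least twice
  have hM : ∀ i, k ≤ i → i + k + 2 ≤ (Fintype.card V) → 2 ≤ (F i).card := by
    intro i hki hin
    by_contra hlt2
    push_neg at hlt2
    have h1c : (F i).card = 1 := by
      have := hone i (by omega)
      omega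
    obtain ⟨e₀, he₀⟩ := Finset.card_eq_one.mp h1c
    have he₀F : e₀ ∈ F i := by rw [he₀]; exact Finset.mem_singleton_self _
    have hrep : ∃ a b, e₀ = s(a, b) ∧ G.Adj a b ∧ pos a ≤ i ∧ i < pos b := by
      rw [hFmem] at he₀F
      obtain ⟨hmemE, hcr⟩ := he₀F
      rw [SimpleGraph.mem_edgeFinset] at hmemE
      induction e₀ using Sym2.ind with
      | _ u v =>
        simp only [eLo_mk, eHi_mk] at hcr
        rw [SimpleGraph.mem_edgeSet] at hmemE
        by_cases hu : pos u ≤ i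
        · exact ⟨u, v, rfl, hmemE, hu, by omega⟩
        · exact ⟨v, u, Sym2.eq_swap.symm, hmemE.symm, by omega, by omega⟩
    obtain ⟨a, b, hab_eq, hadj, hpa, hpb⟩ := hrep
    have huniq : ∀ x z, G.Adj x z → pos x ≤ i → i < pos z → x = a ∧ z = b := by
      intro x z hxz hx hz
      have hmem : s(x, z) ∈ F i := by
        rw [hFmem, SimpleGraph.mem_edgeFinset, SimpleGraph.mem_edgeSet]
        simp only [eLo_mk, eHi_mk]
        exact ⟨hxz, by omega, by omega⟩
      rw [he₀, Finset.mem_singleton, hab_eq, Sym2.eq_iff] at hmem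
      rcases hmem with ⟨rfl, rfl⟩ | ⟨rfl, rfl⟩
      · exact ⟨rfl, rfl⟩
      · omega
    apply hb
    refine ⟨a, b, hadj, ?_, ?_, ?_⟩
    · rw [SimpleGraph.isBridge_iff]
      intro hr
      obtain ⟨p⟩ := hr
      obtain ⟨x, z, hxz, hx, hz⟩ := aux_walk_cross pos i p hpa hpb
      rw [SimpleGraph.deleteEdges_adj] at hxz
      obtain ⟨hGxz, hns⟩ := hxz
      obtain ⟨rfl, rfl⟩ := huniq x z hGxz hx hz
      exact hns (by simp)
    · -- component of a
      have hsub : {x : V | pos x ≤ i} ⊆ {w | (G.deleteEdges {s(a, b)}).Reachable a w} := by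
        intro x hx
        simp only [Set.mem_setOf_eq] at hx ⊢
        obtain ⟨p⟩ := hconn x a
        have hres := aux_side_reach (G := G) (E := s(a, b)) (a₀ := a)
          (fun v => pos v ≤ i) ?_ ?_ p hx
        · rcases hres with h | ⟨_, h⟩ <;> exact h.symm
        · intro x' z' hxz' hx' hz' heq
          rw [Sym2.eq_iff] at heq
          rcases heq with ⟨rfl, rfl⟩ | ⟨rfl, rfl⟩ <;> omega
        · intro x' z' hxz' hx' hz'
          exact (huniq x' z' hxz' hx' (by omega)).1
      have hcard : k < ({x : V | pos x ≤ i}).ncard := by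
        rw [hpos, card_side_le α i (by omega)]
        omega
      rw [Nat.card_coe_set_eq]
      exact lt_of_lt_of_le hcard (Set.ncard_le_ncard hsub (Set.toFinite _))
    · -- component of b
      have hsub : {x : V | i < pos x} ⊆ {w | (G.deleteEdges {s(a, b)}).Reachable b w} := by
        intro x hx
        simp only [Set.mem_setOf_eq] at hx ⊢
        obtain ⟨p⟩ := hconn x b
        have hres := aux_side_reach (G := G) (E := s(a, b)) (a₀ := b)
          (fun v => i < pos v) ?_ ?_ p hx
        · rcases hres with h | ⟨_, h⟩ <;> exact h.symm
        · intro x' z' hxz' hx' hz' heq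
          rw [Sym2.eq_iff] at heq
          rcases heq with ⟨rfl, rfl⟩ | ⟨rfl, rfl⟩ <;> omega
        · intro x' z' hxz' hx' hz'
          exact (huniq z' x' hxz'.symm (by omega) hx').2
      have hcard : k < ({x : V | i < pos x}).ncard := by
        rw [hpos, card_side_gt α i (by omega)]
        omega
      rw [Nat.card_coe_set_eq]
      exact lt_of_lt_of_le hcard (Set.ncard_le_ncard hsub (Set.toFinite _))
  -- the long edges
  set long := G.edgeFinset.filter (fun e => 2 ≤ eHi pos e - eLo pos e) with hlong
  have hexcess : ∑ e ∈ G.edgeFinset, (eHi pos e - eLo pos e - 1) ≤ k := by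
    have h1 : ∑ e ∈ G.edgeFinset, (eHi pos e - eLo pos e)
        = ∑ e ∈ G.edgeFinset, ((eHi pos e - eLo pos e - 1) + 1) :=
      Finset.sum_congr rfl (fun e he => by have := hlt e he; omega)
    rw [Finset.sum_add_distrib, Finset.sum_const, smul_eq_mul, mul_one] at h1
    omega
  have hlongcard : long.card ≤ k := by
    calc long.card = ∑ _e ∈ long, 1 := by rw [Finset.card_eq_sum_ones]
      _ ≤ ∑ e ∈ long, (eHi pos e - eLo pos e - 1) := by
          refine Finset.sum_le_sum (fun e he => ?_)
          rw [hlong, Finset.mem_filter] at he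
          omega
      _ ≤ ∑ e ∈ G.edgeFinset, (eHi pos e - eLo pos e - 1) :=
          Finset.sum_le_sum_of_subset (Finset.filter_subset _ _)
      _ ≤ k := hexcess
  set M := Finset.Ico k ((Fintype.card V) - 1 - k) with hMdef
  have hcover : ∀ i ∈ M, ∃ e ∈ long, eLo pos e ≤ i ∧ i < eHi pos e := by
    intro i hiM
    rw [hMdef, Finset.mem_Ico] at hiM
    have h2 := hM i hiM.1 (by omega)
    obtain ⟨e₁, he₁, e₂, he₂, hne⟩ := Finset.one_lt_card.mp (show 1 < (F i).card by omega)
    have hlen1 : 1 ≤ eHi pos e₁ - eLo pos e₁ := by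
      have := hlt e₁ ((hFmem i e₁).mp he₁).1; omega
    have hlen2 : 1 ≤ eHi pos e₂ - eLo pos e₂ := by
      have := hlt e₂ ((hFmem i e₂).mp he₂).1; omega
    by_cases hl1 : 2 ≤ eHi pos e₁ - eLo pos e₁
    · refine ⟨e₁, ?_, ((hFmem i e₁).mp he₁).2⟩
      rw [hlong, Finset.mem_filter]
      exact ⟨((hFmem i e₁).mp he₁).1, hl1⟩
    · by_cases hl2 : 2 ≤ eHi pos e₂ - eLo pos e₂
      · refine ⟨e₂, ?_, ((hFmem i e₂).mp he₂).2⟩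
        rw [hlong, Finset.mem_filter]
        exact ⟨((hFmem i e₂).mp he₂).1, hl2⟩
      · exact absurd (hshort i e₁ he₁ e₂ he₂ (by omega) (by omega)) hne
  have hcount : M.card ≤ ∑ e ∈ long, (eHi pos e - eLo pos e) := by
    calc M.card = ∑ _i ∈ M, 1 := by rw [Finset.card_eq_sum_ones]
      _ ≤ ∑ i ∈ M, (long.filter (fun e => eLo pos e ≤ i ∧ i < eHi pos e)).card := by
          refine Finset.sum_le_sum (fun i hi => ?_)
          obtain ⟨e, he, hcr⟩ := hcover i hi
          exact Finset.card_pos.mpr ⟨e, Finset.mem_filter.mpr ⟨he, hcr⟩⟩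
      _ = ∑ i ∈ M, ∑ e ∈ long, (if eLo pos e ≤ i ∧ i < eHi pos e then 1 else 0) :=
          Finset.sum_congr rfl (fun i _ => Finset.card_filter _ _)
      _ = ∑ e ∈ long, ∑ i ∈ M, (if eLo pos e ≤ i ∧ i < eHi pos e then 1 else 0) :=
          Finset.sum_comm
      _ ≤ ∑ e ∈ long, (eHi pos e - eLo pos e) := by
          refine Finset.sum_le_sum (fun e _ => ?_)
          rw [← Finset.card_filter]
          have hsub2 : M.filter (fun i => eLo pos e ≤ i ∧ i < eHi pos e)
              ⊆ Finset.Ico (eLo pos e) (eHi pos e) := by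
            intro j hj
            rw [Finset.mem_filter] at hj
            rw [Finset.mem_Ico]
            exact hj.2
          have := Finset.card_le_card hsub2
          rw [Nat.card_Ico] at this
          exact this
  have hlongsum : ∑ e ∈ long, (eHi pos e - eLo pos e) ≤ 2 * k := by
    have h1 : ∑ e ∈ long, (eHi pos e - eLo pos e)
        = ∑ e ∈ long, ((eHi pos e - eLo pos e - 1) + 1) := by
      refine Finset.sum_congr rfl (fun e he => ?_)
      have := hlt e (Finset.mem_of_mem_filter e (by rw [← hlong]; exact he))
      omega
    rw [h1, Finset.sum_add_distrib, Finset.sum_const, smul_eq_mul, mul_one]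
    have h2 : ∑ e ∈ long, (eHi pos e - eLo pos e - 1)
        ≤ ∑ e ∈ G.edgeFinset, (eHi pos e - eLo pos e - 1) :=
      Finset.sum_le_sum_of_subset (Finset.filter_subset _ _)
    omega
  have hMcard : M.card = (Fintype.card V) - 1 - k - k := by rw [hMdef, Nat.card_Ico]
  omega
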